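/- Telescoping product identity for the A_m⁽¹⁾ mutation sequence: for every i with 1 ≤ i ≤ m, the product (1 + x₁(0))·(1 + x₁(1))⋯(1 + x₁(i−1)) equals the nested expression 1 + x₁(0)·(1 + x₂(0)·(1 + ⋯ x_{i−1}(0)·(1 + x_i(0))⋯)); for i = 1 this reads 1 + x₁(0) = 1 + x₁(0). Equivalently, the coefficient F_i in the initial conditions of the linearized recurrence equals K₁ − K_{i+1}, where K₁ = 1 + x₁(0)·(1 + x₂(0)·(⋯(1 + x_{m+1}(0))⋯)) and K_{i+1} = x₁(0)⋯x_{i+1}(0)·(1 + x_{i+2}(0)·(⋯(1 + x_{m+1}(0))⋯)). -/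
import Mathlib

/-- The nested expression `x_{m+1-k}(j)·(1 + x_{m+2-k}(j)·(1 + ⋯ x_m(j)·(1 + x_{m+1}(j))⋯))`
built from the X-variables `x i j`; `nestAux x m j (m + 1 - l)` is the tail
`T_l(j) = x_l(j)·(1 + x_{l+1}(j)·(1 + ⋯ x_m(j)·(1 + x_{m+1}(j))⋯))`. -/
def nestAux {F : Type*} [Field F] (x : ℕ → ℤ → F) (m : ℕ) (j : ℤ) : ℕ → F
  | 0 => x (m + 1) j
  | k + 1 => x (m - k) j * (1 + nestAux x m j k)

/-- The ascending nested expression with innermost variable `x_i(j)`: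
`1 + topNest x j i (i-1)` is `1 + x₁(j)·(1 + x₂(j)·(1 + ⋯ x_{i-1}(j)·(1 + x_i(j))⋯))`. -/
def topNest {F : Type*} [Field F] (x : ℕ → ℤ → F) (j : ℤ) (i : ℕ) : ℕ → F
  | 0 => x i j
  | k + 1 => x (i - (k + 1)) j * (1 + topNest x j i k)

/-- Pulling the first factor out of the "ascending nested sum". -/
lemma step_sum {F : Type*} [Field F] (x : ℕ → ℤ → F) {a b : ℕ} (h : a < b) :
    ∑ s ∈ Finset.Ioc a b, ∏ q ∈ Finset.Ioc a s, x q 0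
      = x (a + 1) 0 * (1 + ∑ s ∈ Finset.Ioc (a + 1) b, ∏ q ∈ Finset.Ioc (a + 1) s, x q 0) := by
  have h1 : Finset.Ioc a b = Finset.cons (a+1) (Finset.Ioc (a+1) b) (by simp) := by
    rw [← Finset.Icc_add_one_left_eq_Ioc, Finset.Icc_eq_cons_Ioc h]
  rw [h1, Finset.sum_cons]
  have h2 : ∏ q ∈ Finset.Ioc a (a+1), x q 0 = x (a+1) 0 := by
    rw [Nat.Ioc_succ_singleton, Finset.prod_singleton]
  have h3 : ∀ s ∈ Finset.Ioc (a+1) b, ∏ q ∈ Finset.Ioc a s, x q 0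
      = x (a+1) 0 * ∏ q ∈ Finset.Ioc (a+1) s, x q 0 := by
    intro s hs
    rw [Finset.mem_Ioc] at hs
    rw [← Finset.Icc_add_one_left_eq_Ioc, Finset.Icc_eq_cons_Ioc hs.1.le, Finset.prod_cons]
  rw [Finset.sum_congr rfl h3, ← Finset.mul_sum, h2]
  ring

/-- Closed form of `nestAux` as a sum of partial products of initial variables. -/
lemma nestAux_sum {F : Type*} [Field F] (x : ℕ → ℤ → F) (m : ℕ) :
    ∀ k, k ≤ m → nestAux x m 0 k
      = ∑ s ∈ Finset.Ioc (m - k) (m + 1), ∏ q ∈ Finset.Ioc (m - k) s, x q 0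
  | 0, _ => by
      simp only [nestAux, Nat.sub_zero, Nat.Ioc_succ_singleton, Finset.sum_singleton,
        Finset.prod_singleton]
  | k+1, hk => by
      have ha : m - k = (m - (k+1)) + 1 := by omega
      rw [nestAux, nestAux_sum x m k (by omega),
        step_sum x (a := m - (k+1)) (b := m+1) (by omega), ← ha]

/-- Closed form of `topNest` as a sum of partial products of initial variables. -/
lemma topNest_sum {F : Type*} [Field F] (x : ℕ → ℤ → F) (i : ℕ) :
    ∀ k, k < i → topNest x 0 i k
      = ∑ s ∈ Finset.Ioc (i - k - 1) i, ∏ q ∈ Finset.Ioc (i - k - 1) s, x q 0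
  | 0, h => by
      have h0 : i - 0 - 1 = i - 1 := rfl
      have h1 : Finset.Ioc (i - 1) i = {i} := by
        ext a
        simp only [Finset.mem_Ioc, Finset.mem_singleton]
        omega
      simp only [topNest, h0, h1, Finset.sum_singleton, Finset.prod_singleton]
  | k+1, hk => by
      have ha : i - k - 1 = (i - (k+1) - 1) + 1 := by omega
      rw [topNest, topNest_sum x i k (by omega),
        step_sum x (a := i - (k+1) - 1) (b := i) (by omega), ← ha,
        show i - (k+1) = i - k - 1 from by omega]

/-- Telescoping product identity for the `A_m⁽¹⁾` mutation sequence: the product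
`(1 + x₁(0))⋯(1 + x₁(i−1))` equals the nested expression
`1 + x₁(0)·(1 + x₂(0)·(⋯(1 + x_i(0))⋯))`, and equivalently equals `K₁ − K_{i+1}`. -/
theorem am1_telescoping_product {F : Type*} [Field F] (m : ℕ) (hm : 2 ≤ m)
    (x : ℕ → ℤ → F)
    (hx₁ : ∀ j : ℤ, x 1 j ≠ 0) (hx₁' : ∀ j : ℤ, 1 + x 1 j ≠ 0)
    (hmutA : ∀ j : ℤ, x 1 (j + 1) * (1 + x 1 j) = x 2 j * x 1 j)
    (hmutB : ∀ j : ℤ, x m (j + 1) * (1 + x 1 j) = x (m + 1) j * x 1 j)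
    (hmutC : ∀ j : ℤ, x (m + 1) (j + 1) * x 1 j = 1)
    (hmutD : ∀ j : ℤ, ∀ i : ℕ, 2 ≤ i → i ≤ m - 1 → x i (j + 1) = x (i + 1) j) :
    ∀ i : ℕ, 1 ≤ i → i ≤ m →
      (∏ l ∈ Finset.range i, (1 + x 1 (l : ℤ))) = 1 + topNest x 0 i (i - 1) ∧
      (∏ l ∈ Finset.range i, (1 + x 1 (l : ℤ)))
        = (1 + x 1 0 * (1 + nestAux x m 0 (m - 1)))
          - (∏ q ∈ Finset.Icc 1 i, x q 0) * nestAux x m 0 (m - i) := by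
  -- shifting the mutation D along time
  have shift : ∀ j : ℕ, ∀ i : ℕ, 2 ≤ i → i + j ≤ m → x i (j : ℤ) = x (i + j) 0 := by
    intro j
    induction j with
    | zero => intro i _ _; norm_num
    | succ j ih =>
      intro i h2 hij
      have e1 : ((j+1 : ℕ) : ℤ) = (j : ℤ) + 1 := by push_cast; ring
      rw [e1, hmutD (j:ℤ) i h2 (by omega), ih (i+1) (by omega) (by omega)]
      congr 1
      omega
  -- key telescoping identity
  have key : ∀ j : ℕ, j + 1 ≤ m →
      x 1 (j : ℤ) * ∏ l ∈ Finset.range j, (1 + x 1 (l:ℤ))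
        = ∏ q ∈ Finset.Ioc 0 (j+1), x q 0 := by
    intro j
    induction j with
    | zero => intro _; simp [Nat.Ioc_succ_singleton]
    | succ j ih =>
      intro hj
      rw [Finset.prod_range_succ]
      have e1 : ((j+1 : ℕ) : ℤ) = (j : ℤ) + 1 := by push_cast; ring
      calc x 1 ((j+1:ℕ):ℤ) * ((∏ l ∈ Finset.range j, (1 + x 1 (l:ℤ))) * (1 + x 1 (j:ℤ)))
          = (x 1 ((j:ℤ)+1) * (1 + x 1 (j:ℤ))) * ∏ l ∈ Finset.range j, (1 + x 1 (l:ℤ)) := by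
            rw [e1]; ring
        _ = x 2 (j:ℤ) * (x 1 (j:ℤ) * ∏ l ∈ Finset.range j, (1 + x 1 (l:ℤ))) := by
            rw [hmutA (j:ℤ)]; ring
        _ = x (2+j) 0 * ∏ q ∈ Finset.Ioc 0 (j+1), x q 0 := by
            rw [ih (by omega), shift j 2 le_rfl (by omega)]
        _ = ∏ q ∈ Finset.Ioc 0 (j+1+1), x q 0 := by
            rw [Finset.prod_Ioc_succ_top (Nat.zero_le (j+1)),
              show 2+j = j+1+1 from by omega]
            ring
  -- closed form for the product
  have Pform : ∀ i : ℕ, i ≤ m →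
      ∏ l ∈ Finset.range i, (1 + x 1 (l:ℤ))
        = 1 + ∑ s ∈ Finset.Ioc 0 i, ∏ q ∈ Finset.Ioc 0 s, x q 0 := by
    intro i
    induction i with
    | zero => intro _; simp
    | succ i ih =>
      intro hi
      rw [Finset.prod_range_succ]
      calc (∏ l ∈ Finset.range i, (1 + x 1 (l:ℤ))) * (1 + x 1 (i:ℤ))
          = (∏ l ∈ Finset.range i, (1 + x 1 (l:ℤ)))
            + x 1 (i:ℤ) * ∏ l ∈ Finset.range i, (1 + x 1 (l:ℤ)) := by ring
        _ = (1 + ∑ s ∈ Finset.Ioc 0 i, ∏ q ∈ Finset.Ioc 0 s, x q 0)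
            + ∏ q ∈ Finset.Ioc 0 (i+1), x q 0 := by
            rw [key i (by omega), ih (by omega)]
        _ = 1 + ∑ s ∈ Finset.Ioc 0 (i+1), ∏ q ∈ Finset.Ioc 0 s, x q 0 := by
            rw [Finset.sum_Ioc_succ_top (Nat.zero_le _)]
            ring
  intro i hi1 him
  constructor
  · rw [Pform i him, topNest_sum x i (i-1) (by omega),
      show i - (i-1) - 1 = 0 from by omega]
  · rw [Pform i him, nestAux_sum x m (m-1) (by omega), nestAux_sum x m (m-i) (by omega),
      show m - (m-1) = 1 from by omega, show m - (m-i) = i from by omega]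
    have hIcc : Finset.Icc 1 i = Finset.Ioc 0 i := by
      ext a
      simp only [Finset.mem_Icc, Finset.mem_Ioc]
      omega
    rw [hIcc]
    have hK := step_sum x (a := 0) (b := m+1) (by omega)
    norm_num at hK
    rw [← hK]
    have hsplit : (∏ q ∈ Finset.Ioc 0 i, x q 0)
        * ∑ s ∈ Finset.Ioc i (m+1), ∏ q ∈ Finset.Ioc i s, x q 0
        = ∑ s ∈ Finset.Ioc i (m+1), ∏ q ∈ Finset.Ioc 0 s, x q 0 := by
      rw [Finset.mul_sum]
      refine Finset.sum_congr rfl fun s hs => ?_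
      rw [Finset.mem_Ioc] at hs
      exact Finset.prod_Ioc_consecutive _ (Nat.zero_le i) hs.1.le
    rw [hsplit, ← Finset.sum_Ioc_consecutive _ (Nat.zero_le i) (by omega : i ≤ m+1)]
    ring
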